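/- arXiv:1008.2804 — 4 statements merged into one kernel-verified Lean document; each statement's English description precedes it below -/
import Mathlib

section
/- Let V ⊆ ℝ^N be a subspace with dim(V) > k, and let k < r. Then the set of matrices A ∈ ℝ^{r×N} such that dim(A(V)) ≤ k has Lebesgue measure zero in ℝ^{r×N}. -/
open MeasureTheory MvPolynomial

lemma mvPolynomial_zero_set_null_fin :
    ∀ (n : ℕ) (p : MvPolynomial (Fin n) ℝ), p ≠ 0 →
    MeasureTheory.volume {x : Fin n → ℝ | MvPolynomial.eval x p = 0} = 0 := by
  intro n
  induction n with
  | zero =>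
    intro p hp
    obtain ⟨c, rfl⟩ := MvPolynomial.C_surjective (Fin 0) p
    have hc : c ≠ 0 := by simpa using hp
    have : {x : Fin 0 → ℝ | MvPolynomial.eval x (C c) = 0} = ∅ := by
      ext x; simp [hc]
    rw [this, measure_empty]
  | succ n ih =>
    intro p hp
    set q := MvPolynomial.finSuccEquiv ℝ n p with hqdef
    have hq0 : q ≠ 0 := by
      intro h
      exact hp ((EmbeddingLike.map_eq_zero_iff).mp h)
    have hlc : q.leadingCoeff ≠ 0 := Polynomial.leadingCoeff_ne_zero.mpr hq0
    -- the "bad slice" set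
    set T : Set ((Fin n → ℝ) × ℝ) :=
      {z | MvPolynomial.eval (Fin.cons z.2 z.1) p = 0} with hTdef
    have hconsMeas : Measurable fun z : (Fin n → ℝ) × ℝ => (Fin.cons z.2 z.1 : Fin (n+1) → ℝ) := by
      rw [measurable_pi_iff]
      intro i
      refine Fin.cases ?_ ?_ i
      · simpa using measurable_snd
      · intro j
        simp only [Fin.cons_succ]; exact (measurable_pi_apply j).comp measurable_fst
    have hTm : MeasurableSet T :=
      ((MvPolynomial.continuous_eval p).measurable.comp hconsMeas) (measurableSet_singleton 0)
    have hT : (MeasureTheory.volume.prod MeasureTheory.volume) T = 0 := by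
      rw [MeasureTheory.Measure.measure_prod_null hTm]
      have hae : ∀ᵐ x : Fin n → ℝ, ¬ MvPolynomial.eval x q.leadingCoeff = 0 := by
        rw [ae_iff]
        simpa using ih q.leadingCoeff hlc
      filter_upwards [hae] with x hx
      have hQ : q.map (MvPolynomial.eval x) ≠ 0 := by
        intro h
        apply hx
        have h2 : (q.map (MvPolynomial.eval x)).coeff q.natDegree
            = MvPolynomial.eval x q.leadingCoeff := by
          rw [Polynomial.coeff_map]; rfl
        rw [h, Polynomial.coeff_zero] at h2
        exact h2.symm
      have hset : Prod.mk x ⁻¹' T = {y : ℝ | (q.map (MvPolynomial.eval x)).IsRoot y} := by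
        ext y
        simp only [hTdef, Set.mem_preimage, Set.mem_setOf_eq, Polynomial.IsRoot]
        rw [MvPolynomial.eval_eq_eval_mv_eval']
      show MeasureTheory.volume (Prod.mk x ⁻¹' T) = 0
      rw [hset]
      exact Set.Finite.measure_zero (Polynomial.finite_setOf_isRoot hQ) _
    -- transfer along piFinSuccAbove at 0 and swap
    have hSeq : {x : Fin (n+1) → ℝ | MvPolynomial.eval x p = 0}
        = (MeasurableEquiv.piFinSuccAbove (fun _ : Fin (n+1) => ℝ) 0) ⁻¹' (Prod.swap ⁻¹' T) := by
      ext A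
      have hA : (Fin.cons (A 0) (fun j => A j.succ) : Fin (n+1) → ℝ) = A := by
        ext i
        refine Fin.cases ?_ ?_ i
        · simp
        · intro j; simp
      simp only [Set.mem_preimage, Set.mem_setOf_eq, hTdef,
        MeasurableEquiv.piFinSuccAbove_apply, Prod.swap]
      rw [show (Fin.insertNthEquiv (fun _ : Fin (n+1) => ℝ) 0).symm A
            = (A 0, fun j => A ((0 : Fin (n+1)).succAbove j)) from rfl]
      dsimp
      rw [hA]
    rw [hSeq]
    rw [(MeasureTheory.volume_preserving_piFinSuccAbove (fun _ : Fin (n+1) => ℝ) 0).measure_preimage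
      ((hTm.preimage measurable_swap).nullMeasurableSet)]
    rw [MeasureTheory.Measure.volume_eq_prod]
    rw [(MeasureTheory.Measure.measurePreserving_swap (μ := (volume : MeasureTheory.Measure ℝ))
      (ν := (volume : MeasureTheory.Measure (Fin n → ℝ)))).measure_preimage
      hTm.nullMeasurableSet]
    exact hT

lemma mvPolynomial_zero_set_null {σ : Type*} [Fintype σ]
    (p : MvPolynomial σ ℝ) (hp : p ≠ 0) :
    MeasureTheory.Measure.pi (fun _ : σ => (MeasureTheory.volume : MeasureTheory.Measure ℝ))
      {x : σ → ℝ | MvPolynomial.eval x p = 0} = 0 := by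
  obtain ⟨n, ⟨f⟩⟩ : ∃ n, Nonempty (Fin n ≃ σ) :=
    ⟨Fintype.card σ, ⟨(Fintype.equivFin σ).symm⟩⟩
  set e := MeasurableEquiv.piCongrLeft (fun _ : σ => ℝ) f with hedef
  have hmp := MeasureTheory.measurePreserving_piCongrLeft (fun _ : σ => (volume : Measure ℝ)) f
  have hex : ∀ (x : Fin n → ℝ) (s : σ), e x s = x (f.symm s) := by
    intro x s
    rw [hedef]
    show (Equiv.piCongrLeft (fun _ : σ => ℝ) f) x s = x (f.symm s)
    conv_lhs => rw [← f.apply_symm_apply s]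
    exact Equiv.piCongrLeft_apply_apply (fun _ : σ => ℝ) f x (f.symm s)
  have hmeas : MeasurableSet {x : σ → ℝ | MvPolynomial.eval x p = 0} :=
    (MvPolynomial.continuous_eval p).measurable (measurableSet_singleton 0)
  rw [← hmp.measure_preimage hmeas.nullMeasurableSet]
  have hpre : ⇑e ⁻¹' {x : σ → ℝ | MvPolynomial.eval x p = 0}
      = {x : Fin n → ℝ | MvPolynomial.eval x (MvPolynomial.rename f.symm p) = 0} := by
    ext x
    simp only [Set.mem_preimage, Set.mem_setOf_eq, MvPolynomial.eval_rename]
    have : e x = x ∘ f.symm := funext fun s => hex x s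
    rw [this]
  rw [hpre]
  have hq : MvPolynomial.rename f.symm p ≠ 0 := fun h =>
    hp (MvPolynomial.rename_injective f.symm f.symm.injective (by simpa using h))
  exact mvPolynomial_zero_set_null_fin n _ hq

lemma measurePreserving_uncurry (r N : ℕ) :
    MeasureTheory.MeasurePreserving
      (fun (A : Fin r → Fin N → ℝ) (p : Fin r × Fin N) => A p.1 p.2)
      MeasureTheory.volume
      (MeasureTheory.Measure.pi fun _ : Fin r × Fin N => (MeasureTheory.volume : MeasureTheory.Measure ℝ)) := by
  have hm : Measurable (fun (A : Fin r → Fin N → ℝ) (p : Fin r × Fin N) => A p.1 p.2) :=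
    measurable_pi_iff.mpr fun p => (measurable_pi_apply p.2).comp (measurable_pi_apply p.1)
  refine ⟨hm, ?_⟩
  refine (MeasureTheory.Measure.pi_eq fun s hs => ?_).symm
  rw [MeasureTheory.Measure.map_apply hm (MeasurableSet.univ_pi hs)]
  have hpre : (fun (A : Fin r → Fin N → ℝ) (p : Fin r × Fin N) => A p.1 p.2) ⁻¹' Set.univ.pi s
      = Set.univ.pi fun i => Set.univ.pi fun j => s (i, j) := by
    ext A
    simp [Set.mem_pi, Prod.forall]
  rw [hpre]
  rw [MeasureTheory.volume_pi_pi]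
  have : ∀ i : Fin r, volume (Set.univ.pi fun j => s (i, j)) = ∏ j, volume (s (i, j)) :=
    fun i => MeasureTheory.volume_pi_pi _
  rw [Finset.prod_congr rfl fun i _ => this i]
  rw [← Fintype.prod_prod_type']

/-- If `V ⊆ ℝ^N` is a subspace with `dim V > k` and `k < r`, then the set of matrices
`A ∈ ℝ^{r×N}` with `dim A(V) ≤ k` has Lebesgue measure zero (matrices identified with
`ℝ^{rN}` carrying Lebesgue measure). -/
theorem measure_zero_dim_image_le {N r k : ℕ} (hkr : k < r)
    (V : Submodule ℝ (Fin N → ℝ)) (hV : k < Module.finrank ℝ V) :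
    MeasureTheory.volume {A : Fin r → Fin N → ℝ |
      Module.finrank ℝ (V.map (Matrix.of A).mulVecLin) ≤ k} = 0 := by
  have hk1 : k + 1 ≤ Module.finrank ℝ V := hV
  have hkr1 : k + 1 ≤ r := hkr
  let b := Module.finBasis ℝ V
  set v : Fin (k+1) → (Fin N → ℝ) := fun j => (b (Fin.castLE hk1 j) : Fin N → ℝ) with hvdef
  have hvV : ∀ j, v j ∈ V := fun j => (b (Fin.castLE hk1 j)).2
  have hv : LinearIndependent ℝ v := by
    have h1 : LinearIndependent ℝ (fun j : Fin (k+1) => b (Fin.castLE hk1 j)) :=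
      b.linearIndependent.comp _ (Fin.castLE_injective hk1)
    exact h1.map' V.subtype V.ker_subtype
  -- a left inverse sending `v j` to `Pi.single j 1`
  set Tl : (Fin (k+1) → ℝ) →ₗ[ℝ] (Fin N → ℝ) := Fintype.linearCombination ℝ v with hTldef
  have hker : LinearMap.ker Tl = ⊥ := by
    apply LinearMap.ker_eq_bot'.mpr
    intro c hc
    have hc' : ∑ i, c i • v i = 0 := by
      rw [← Fintype.linearCombination_apply ℝ v c]; exact hc
    funext i
    exact Fintype.linearIndependent_iff.mp hv c hc' i
  obtain ⟨g, hg⟩ := Tl.exists_leftInverse_of_injective hker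
  have hgv : ∀ j, g (v j) = Pi.single j 1 := by
    intro j
    have h1 : Tl (Pi.single j (1:ℝ)) = v j := by
      rw [hTldef, Fintype.linearCombination_apply]
      simp [Pi.single_apply]
    calc g (v j) = (g.comp Tl) (Pi.single j 1) := by rw [LinearMap.comp_apply, h1]
    _ = Pi.single j 1 := by rw [hg]; rfl
  -- extension by zero to `Fin r` coordinates
  set E : (Fin (k+1) → ℝ) →ₗ[ℝ] (Fin r → ℝ) :=
    LinearMap.pi (fun i : Fin r =>
      if h : (i : ℕ) < k + 1 then LinearMap.proj (⟨i, h⟩ : Fin (k+1)) else 0) with hEdef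
  set F := E.comp g with hFdef
  set A0 : Matrix (Fin r) (Fin N) ℝ := LinearMap.toMatrix' F with hA0def
  have hA0 : ∀ y, Matrix.mulVec A0 y = F y := by
    intro y
    rw [← Matrix.toLin'_apply, hA0def, Matrix.toLin'_toMatrix']
  -- the determinant polynomial
  set P : MvPolynomial (Fin r × Fin N) ℝ :=
    Matrix.det (Matrix.of fun i j : Fin (k+1) =>
      ∑ n : Fin N, MvPolynomial.C (v j n) * MvPolynomial.X (Fin.castLE hkr1 i, n)) with hPdef
  have hPeval : ∀ A : Fin r → Fin N → ℝ,
      MvPolynomial.eval (fun p : Fin r × Fin N => A p.1 p.2) P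
        = Matrix.det (Matrix.of fun i j : Fin (k+1) =>
            Matrix.mulVec (Matrix.of A) (v j) (Fin.castLE hkr1 i)) := by
    intro A
    rw [hPdef, RingHom.map_det]
    congr 1
    ext i j
    simp [Matrix.map_apply, Matrix.mulVec, dotProduct, mul_comm]
  have hP0 : P ≠ 0 := by
    intro h
    have h1 := hPeval (fun i n => A0 i n)
    have hmat : (Matrix.of fun i j : Fin (k+1) =>
        Matrix.mulVec (Matrix.of fun i n => A0 i n) (v j) (Fin.castLE hkr1 i)) = 1 := by
      ext i j
      have h2 : Matrix.mulVec (Matrix.of fun i n => A0 i n) (v j) = F (v j) := hA0 (v j)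
      rw [Matrix.of_apply, h2, hFdef, LinearMap.comp_apply, hgv j, hEdef, LinearMap.pi_apply]
      have hlt : ((Fin.castLE hkr1 i : Fin r) : ℕ) < k + 1 := i.2
      rw [dif_pos hlt]
      have : (⟨(Fin.castLE hkr1 i : Fin r), hlt⟩ : Fin (k+1)) = i := by
        apply Fin.ext; rfl
      rw [this]
      simp [LinearMap.proj_apply, Pi.single_apply, Matrix.one_apply, eq_comm]
    rw [h, map_zero, hmat, Matrix.det_one] at h1
    exact zero_ne_one h1
  -- inclusion into the zero set of `P`
  have hsub : {A : Fin r → Fin N → ℝ |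
      Module.finrank ℝ (V.map (Matrix.of A).mulVecLin) ≤ k}
      ⊆ (fun (A : Fin r → Fin N → ℝ) (p : Fin r × Fin N) => A p.1 p.2) ⁻¹'
        {x : Fin r × Fin N → ℝ | MvPolynomial.eval x P = 0} := by
    intro A hA
    have hdep : ¬ LinearIndependent ℝ (fun j : Fin (k+1) => (Matrix.of A).mulVecLin (v j)) := by
      intro hind
      have hmem : ∀ j, (Matrix.of A).mulVecLin (v j) ∈ V.map (Matrix.of A).mulVecLin :=
        fun j => Submodule.mem_map_of_mem (hvV j)
      have hwi : LinearIndependent ℝ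
          (fun j : Fin (k+1) => (⟨_, hmem j⟩ : ↥(V.map (Matrix.of A).mulVecLin))) := by
        apply LinearIndependent.of_comp (V.map (Matrix.of A).mulVecLin).subtype
        exact hind
      have hcard := hwi.fintype_card_le_finrank
      rw [Fintype.card_fin] at hcard
      exact absurd (le_trans hcard hA) (by omega)
    obtain ⟨c, hcsum, i0, hi0⟩ := Fintype.not_linearIndependent_iff.mp hdep
    show MvPolynomial.eval (fun p : Fin r × Fin N => A p.1 p.2) P = 0
    rw [hPeval A]
    apply Matrix.exists_mulVec_eq_zero_iff.mp
    refine ⟨c, fun h => hi0 (by rw [h]; rfl), ?_⟩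
    funext i
    have h3 := congrFun hcsum (Fin.castLE hkr1 i)
    simp only [Finset.sum_apply, Pi.smul_apply, smul_eq_mul, Pi.zero_apply] at h3
    show ∑ j, (Matrix.of fun i j : Fin (k+1) =>
      Matrix.mulVec (Matrix.of A) (v j) (Fin.castLE hkr1 i)) i j * c j = 0
    simp only [Matrix.of_apply]
    rw [← h3]
    congr 1
    ext j
    rw [mul_comm]
    rfl
  apply MeasureTheory.measure_mono_null hsub
  have hZm : MeasurableSet {x : Fin r × Fin N → ℝ | MvPolynomial.eval x P = 0} :=
    (MvPolynomial.continuous_eval P).measurable (measurableSet_singleton 0)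
  rw [(measurePreserving_uncurry r N).measure_preimage hZm.nullMeasurableSet]
  exact mvPolynomial_zero_set_null P hP0
end

section
/- Let A, B be m×m real symmetric matrices and let λ_1(M) ≥ ... ≥ λ_m(M) denote the eigenvalues of a symmetric matrix M in decreasing order. Then for any choice of indices 1 ≤ i_1 < i_2 < ... < i_k ≤ m, one has Σ_{j=1}^k (λ_{i_j}(A) − λ_{i_j}(B)) ≤ Σ_{j=1}^k λ_j(A − B). -/
open Matrix Finset

/-- The eigenvalues of a real symmetric matrix, listed in decreasing order
(with multiplicity). -/
noncomputable def eigDesc {m : ℕ} {A : Matrix (Fin m) (Fin m) ℝ}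
    (hA : A.IsHermitian) : Fin m → ℝ :=
  fun i => hA.eigenvalues (Tuple.sort (fun j => -hA.eigenvalues j) i)

section Aux

variable {m : ℕ}

local notation "E" => EuclideanSpace ℝ (Fin m)

lemma eigDesc_antitone {A : Matrix (Fin m) (Fin m) ℝ} (hA : A.IsHermitian) :
    Antitone (eigDesc hA) := fun _ _ hij =>
  neg_le_neg_iff.mp (Tuple.monotone_sort (fun j => -hA.eigenvalues j) hij)

lemma sum_eigDesc {A : Matrix (Fin m) (Fin m) ℝ} (hA : A.IsHermitian) (g : ℝ → ℝ) :
    ∑ i, g (eigDesc hA i) = ∑ i, g (hA.eigenvalues i) :=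
  Equiv.sum_comp (Tuple.sort (fun j => -hA.eigenvalues j)) (fun i => g (hA.eigenvalues i))

lemma toEuclideanLin_eigen {A : Matrix (Fin m) (Fin m) ℝ} (hA : A.IsHermitian) (j : Fin m) :
    Matrix.toEuclideanLin A (hA.eigenvectorBasis j) = hA.eigenvalues j • hA.eigenvectorBasis j := by
  apply (WithLp.equiv 2 _).injective
  ext i
  have := congrFun (hA.mulVec_eigenvectorBasis j) i
  simpa [Matrix.toEuclideanLin_apply] using this

lemma qf_eq {A : Matrix (Fin m) (Fin m) ℝ} (hA : A.IsHermitian) (x : E) :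
    (inner ℝ x (Matrix.toEuclideanLin A x) : ℝ)
      = ∑ j, hA.eigenvalues j * (hA.eigenvectorBasis.repr x j) ^ 2 := by
  set b := hA.eigenvectorBasis with hb
  have hx : x = ∑ j, b.repr x j • b j := (b.sum_repr x).symm
  have hTx : Matrix.toEuclideanLin A x = ∑ j, (b.repr x j * hA.eigenvalues j) • b j := by
    conv_lhs => rw [hx]
    rw [map_sum]
    refine Finset.sum_congr rfl fun j _ => ?_
    rw [_root_.map_smul, toEuclideanLin_eigen hA j, smul_smul]
  rw [hTx, inner_sum]
  refine Finset.sum_congr rfl fun j _ => ?_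
  rw [real_inner_smul_right, real_inner_comm, b.repr_apply_apply]
  ring

lemma inner_self_eq (b : OrthonormalBasis (Fin m) ℝ E) (x : E) :
    (inner ℝ x x : ℝ) = ∑ j, (b.repr x j) ^ 2 := by
  rw [← b.repr.inner_map_map x x, PiLp.inner_apply]
  simp [sq]

lemma repr_vanish (b : OrthonormalBasis (Fin m) ℝ E) (t : Finset (Fin m)) {x : E}
    (hx : x ∈ Submodule.span ℝ (b '' ↑t)) {j : Fin m} (hj : j ∉ t) :
    b.repr x j = 0 := by
  rw [b.repr_apply_apply]
  induction hx using Submodule.span_induction with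
  | mem v hv =>
    obtain ⟨i, hi, rfl⟩ := hv
    exact b.orthonormal.2 (fun h => hj (h ▸ hi))
  | zero => simp
  | add u v _ _ hu hv => rw [inner_add_right, hu, hv, add_zero]
  | smul c u _ hu => rw [inner_smul_right, hu, mul_zero]

lemma finrank_span_basis (b : OrthonormalBasis (Fin m) ℝ E) (t : Finset (Fin m)) :
    Module.finrank ℝ (Submodule.span ℝ (b '' ↑t)) = t.card := by
  have h1 : LinearIndependent ℝ (fun i : (↑t : Set (Fin m)) => b ↑i) :=
    b.orthonormal.linearIndependent.comp _ Subtype.val_injective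
  have h2 := finrank_span_eq_card h1
  rw [← Set.image_eq_range] at h2
  rw [h2]
  simp

lemma inner_toEuclideanLin_dot (M : Matrix (Fin m) (Fin m) ℝ) (x : E) :
    (inner ℝ x (Matrix.toEuclideanLin M x) : ℝ) = dotProduct (x : Fin m → ℝ) (M *ᵥ x) := by
  simp [Matrix.toEuclideanLin_apply, PiLp.inner_apply, dotProduct]
  exact Finset.sum_congr rfl fun _ _ => mul_comm _ _

lemma eigDesc_mono_shift {B D : Matrix (Fin m) (Fin m) ℝ} (hB : B.IsHermitian)
    (hD : D.IsHermitian) (c : ℝ) (h : (D - B - c • 1).PosSemidef) (i : Fin m) :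
    eigDesc hB i + c ≤ eigDesc hD i := by
  classical
  set bB := hB.eigenvectorBasis with hbB
  set bD := hD.eigenvectorBasis with hbD
  set σB := Tuple.sort (fun j => -hB.eigenvalues j) with hσB
  set σD := Tuple.sort (fun j => -hD.eigenvalues j) with hσD
  set tB : Finset (Fin m) := (Finset.Iic i).image σB with htB
  set tD : Finset (Fin m) := (Finset.Ici i).image σD with htD
  set V := Submodule.span ℝ (bB '' ↑tB) with hVdef
  set W := Submodule.span ℝ (bD '' ↑tD) with hWdef
  have hV : Module.finrank ℝ V = i.val + 1 := by
    rw [hVdef, finrank_span_basis, htB, Finset.card_image_of_injective _ σB.injective,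
      Fin.card_Iic]
  have hW : Module.finrank ℝ W = m - i.val := by
    rw [hWdef, finrank_span_basis, htD, Finset.card_image_of_injective _ σD.injective,
      Fin.card_Ici]
  have hsup : Module.finrank ℝ (V ⊔ W : Submodule ℝ E) ≤ m :=
    le_trans (Submodule.finrank_le _) (by simp)
  have hinf : 0 < Module.finrank ℝ (V ⊓ W : Submodule ℝ E) := by
    have hfr := Submodule.finrank_sup_add_finrank_inf_eq V W
    have him := i.isLt
    omega
  have hne : V ⊓ W ≠ ⊥ := by
    intro hbot
    rw [hbot, finrank_bot] at hinf
    omega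
  obtain ⟨x, hxm, hx0⟩ := Submodule.exists_mem_ne_zero_of_ne_bot hne
  have hxV : x ∈ V := hxm.1
  have hxW : x ∈ W := hxm.2
  set n : ℝ := inner ℝ x x with hn
  have hnpos : 0 < n := by
    rw [hn, real_inner_self_eq_norm_sq]
    have : ‖x‖ ≠ 0 := fun h => hx0 (norm_eq_zero.mp h)
    positivity
  have hBbound : eigDesc hB i * n ≤ inner ℝ x (Matrix.toEuclideanLin B x) := by
    rw [qf_eq hB x, hn, inner_self_eq bB x, Finset.mul_sum]
    refine Finset.sum_le_sum fun j _ => ?_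
    by_cases hj : j ∈ tB
    · obtain ⟨j', hj', rfl⟩ := Finset.mem_image.mp hj
      have : eigDesc hB i ≤ eigDesc hB j' := eigDesc_antitone hB (Finset.mem_Iic.mp hj')
      have h2 : eigDesc hB j' = hB.eigenvalues (σB j') := rfl
      nlinarith [sq_nonneg (bB.repr x (σB j'))]
    · rw [repr_vanish bB tB hxV hj]
      simp
  have hDbound : (inner ℝ x (Matrix.toEuclideanLin D x) : ℝ) ≤ eigDesc hD i * n := by
    rw [qf_eq hD x, hn, inner_self_eq bD x, Finset.mul_sum]
    refine Finset.sum_le_sum fun j _ => ?_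
    by_cases hj : j ∈ tD
    · obtain ⟨j', hj', rfl⟩ := Finset.mem_image.mp hj
      have : eigDesc hD j' ≤ eigDesc hD i := eigDesc_antitone hD (Finset.mem_Ici.mp hj')
      have h2 : eigDesc hD j' = hD.eigenvalues (σD j') := rfl
      nlinarith [sq_nonneg (bD.repr x (σD j'))]
    · rw [repr_vanish bD tD hxW hj]
      simp
  have hpsd : (0:ℝ) ≤ inner ℝ x (Matrix.toEuclideanLin D x) - inner ℝ x (Matrix.toEuclideanLin B x)
      - c * n := by
    have h0 := h.dotProduct_mulVec_nonneg (x : Fin m → ℝ)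
    rw [star_trivial] at h0
    have h1 : (inner ℝ x (Matrix.toEuclideanLin (D - B - c • 1) x) : ℝ)
        = inner ℝ x (Matrix.toEuclideanLin D x) - inner ℝ x (Matrix.toEuclideanLin B x) - c * n := by
      have hone : Matrix.toEuclideanLin (1 : Matrix (Fin m) (Fin m) ℝ) x = x := by
        apply (WithLp.equiv 2 _).injective
        simp [Matrix.toEuclideanLin_apply]
      rw [map_sub, map_sub, _root_.map_smul]
      simp only [LinearMap.sub_apply, LinearMap.smul_apply, inner_sub_right,
        real_inner_smul_right, hone]
      rfl
    rw [← h1, inner_toEuclideanLin_dot]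
    exact h0
  have : (eigDesc hB i + c) * n ≤ eigDesc hD i * n := by nlinarith
  exact le_of_mul_le_mul_right this hnpos

lemma lid_trace_eq {A : Matrix (Fin m) (Fin m) ℝ} (hA : A.IsHermitian) :
    A.trace = ∑ i, hA.eigenvalues i := by
  conv_lhs => rw [hA.spectral_theorem]
  simp only [Unitary.conjStarAlgAut_apply, Unitary.coe_star]
  rw [Matrix.trace_mul_cycle, Unitary.coe_star_mul_self, one_mul, Matrix.trace_diagonal]
  simp

lemma lid_posPart {C : Matrix (Fin m) (Fin m) ℝ} (hC : C.IsHermitian) (c : ℝ) :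
    ∃ Ep : Matrix (Fin m) (Fin m) ℝ, Ep.PosSemidef ∧
      (Ep - (C - c • 1)).PosSemidef ∧ Ep.trace = ∑ i, max (hC.eigenvalues i - c) 0 := by
  classical
  set U : Matrix (Fin m) (Fin m) ℝ := (hC.eigenvectorUnitary : Matrix (Fin m) (Fin m) ℝ) with hU
  have hU2 : star U * U = 1 := Unitary.coe_star_mul_self _
  set conj : (Fin m → ℝ) → Matrix (Fin m) (Fin m) ℝ :=
    fun d => U * Matrix.diagonal d * star U with hconj
  have hconj_sub : ∀ d1 d2, conj d1 - conj d2 = conj (d1 - d2) := by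
    intro d1 d2
    show U * Matrix.diagonal d1 * star U - U * Matrix.diagonal d2 * star U
      = U * Matrix.diagonal (d1 - d2) * star U
    rw [show d1 - d2 = fun i => d1 i - d2 i from rfl, ← Matrix.diagonal_sub, mul_sub, sub_mul]
  have hconj_psd : ∀ d : Fin m → ℝ, 0 ≤ d → (conj d).PosSemidef := by
    intro d hd
    exact (Matrix.PosSemidef.diagonal hd).mul_mul_conjTranspose_same U
  have hconj_trace : ∀ d : Fin m → ℝ, (conj d).trace = ∑ i, d i := by
    intro d
    rw [hconj, Matrix.trace_mul_cycle, hU2, one_mul, Matrix.trace_diagonal]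
  have hCconj : C = conj hC.eigenvalues := by
    conv_lhs => rw [hC.spectral_theorem]
    simp [hconj, hU]
  have hU1 : U * star U = 1 := Unitary.coe_mul_star_self _
  have hone : c • (1 : Matrix (Fin m) (Fin m) ℝ) = conj (fun _ => c) := by
    rw [show conj (fun _ => c) = U * Matrix.diagonal (fun _ : Fin m => c) * star U from rfl,
      ← Matrix.smul_one_eq_diagonal, Matrix.mul_smul, Matrix.smul_mul, Matrix.mul_one, hU1]
  have h2 : conj (fun i => max (hC.eigenvalues i - c) 0) - (C - c • 1)
      = conj ((fun i => max (hC.eigenvalues i - c) 0) - fun i => hC.eigenvalues i - c) := by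
    have h3 : conj (fun i => hC.eigenvalues i - c) = C - c • 1 := by
      rw [show (fun i => hC.eigenvalues i - c) = hC.eigenvalues - (fun _ => c) from rfl,
        ← hconj_sub, ← hCconj, ← hone]
    rw [← h3, hconj_sub]
  refine ⟨conj (fun i => max (hC.eigenvalues i - c) 0), hconj_psd _ (fun i => le_max_right _ _),
    ?_, hconj_trace _⟩
  rw [h2]
  refine hconj_psd _ (fun i => ?_)
  simp only [Pi.sub_apply]
  simp

end Aux

/-- Lidskii-type inequality (Bhatia, Theorem III.4.1): for real symmetric `A, B` and any
strictly increasing choice of indices `i_1 < ... < i_k`,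
`Σ_j (λ_{i_j}(A) − λ_{i_j}(B)) ≤ Σ_{j=1}^k λ_j(A − B)`. -/
theorem lidskii_inequality {m k : ℕ} (hkm : k ≤ m)
    (A B : Matrix (Fin m) (Fin m) ℝ)
    (hA : A.IsHermitian) (hB : B.IsHermitian) (hAB : (A - B).IsHermitian)
    (ι : Fin k → Fin m) (hι : StrictMono ι) :
    ∑ j : Fin k, (eigDesc hA (ι j) - eigDesc hB (ι j)) ≤
      ∑ j : Fin k, eigDesc hAB (Fin.castLE hkm j) := by
  rcases Nat.eq_zero_or_pos k with rfl | hkpos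
  · simp
  have hklt : k - 1 < m := by omega
  set klast : Fin m := ⟨k - 1, hklt⟩ with hklast
  set c : ℝ := eigDesc hAB klast with hc
  obtain ⟨Ep, hEpPSD, hEpC, hEptr⟩ := lid_posPart hAB c
  set D : Matrix (Fin m) (Fin m) ℝ := B + c • 1 + Ep with hDdef
  have hsm1 : (c • (1 : Matrix (Fin m) (Fin m) ℝ)).IsHermitian := by
    simp [Matrix.IsHermitian, Matrix.conjTranspose_smul]
  have hDh : D.IsHermitian := (hB.add hsm1).add hEpPSD.1
  have hstep1 : ∀ i, eigDesc hA i ≤ eigDesc hDh i := by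
    intro i
    have hps : (D - A - (0:ℝ) • 1).PosSemidef := by
      have heq : D - A - (0:ℝ) • 1 = Ep - (A - B - c • 1) := by
        rw [zero_smul, sub_zero, hDdef]; abel
      rw [heq]; exact hEpC
    have := eigDesc_mono_shift hA hDh 0 hps i
    linarith
  have hstep2 : ∀ i, eigDesc hB i + c ≤ eigDesc hDh i := by
    intro i
    refine eigDesc_mono_shift hB hDh c ?_ i
    have heq : D - B - c • 1 = Ep := by rw [hDdef]; abel
    rw [heq]; exact hEpPSD
  set g : Fin m → ℝ := fun i => eigDesc hDh i - eigDesc hB i - c with hg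
  have hgnn : ∀ i, 0 ≤ g i := fun i => by
    have := hstep2 i; simp only [hg]; linarith
  have hsub : ∑ j : Fin k, g (ι j) ≤ ∑ i : Fin m, g i :=
    calc ∑ j : Fin k, g (ι j) = ∑ i ∈ Finset.image ι Finset.univ, g i :=
        (Finset.sum_image (fun a _ b _ h => hι.injective h)).symm
      _ ≤ ∑ i : Fin m, g i := Finset.sum_le_sum_of_subset_of_nonneg (Finset.subset_univ _)
          (fun i _ _ => hgnn i)
  have hsumD : ∑ i : Fin m, eigDesc hDh i = D.trace := by
    rw [lid_trace_eq hDh]; exact sum_eigDesc hDh (fun t => t)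
  have hsumB : ∑ i : Fin m, eigDesc hB i = B.trace := by
    rw [lid_trace_eq hB]; exact sum_eigDesc hB (fun t => t)
  have htrD : D.trace = B.trace + c * m + Ep.trace := by
    rw [hDdef, Matrix.trace_add, Matrix.trace_add, Matrix.trace_smul, Matrix.trace_one]
    simp [Fintype.card_fin, smul_eq_mul]
    try ring
  have hgsum : ∑ i : Fin m, g i = Ep.trace := by
    simp only [hg]
    rw [Finset.sum_sub_distrib, Finset.sum_sub_distrib, hsumD, hsumB, Finset.sum_const,
      Finset.card_univ, Fintype.card_fin, nsmul_eq_mul, htrD]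
    ring
  have htr2 : Ep.trace = ∑ i : Fin m, max (eigDesc hAB i - c) 0 := by
    rw [hEptr]; exact (sum_eigDesc hAB (fun t => max (t - c) 0)).symm
  have hmax : ∀ i : Fin m, max (eigDesc hAB i - c) 0
      = if (i : ℕ) < k then eigDesc hAB i - c else 0 := by
    intro i
    by_cases hik : (i : ℕ) < k
    · rw [if_pos hik, max_eq_left]
      have hle : i ≤ klast := by rw [Fin.le_def]; simp only [hklast]; omega
      have := eigDesc_antitone hAB hle
      rw [hc]; linarith
    · rw [if_neg hik, max_eq_right]
      have hle : klast ≤ i := by rw [Fin.le_def]; simp only [hklast]; omega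
      have := eigDesc_antitone hAB hle
      rw [hc]; linarith
  have himg : Finset.image (Fin.castLE hkm) Finset.univ
      = Finset.univ.filter (fun i : Fin m => (i : ℕ) < k) := by
    ext i
    rw [Finset.mem_image, Finset.mem_filter]
    constructor
    · rintro ⟨j, -, rfl⟩; exact ⟨Finset.mem_univ _, j.isLt⟩
    · rintro ⟨-, hik⟩; exact ⟨⟨i, hik⟩, Finset.mem_univ _, rfl⟩
  have hfin : ∑ i : Fin m, max (eigDesc hAB i - c) 0
      = ∑ j : Fin k, (eigDesc hAB (Fin.castLE hkm j) - c) :=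
    calc ∑ i : Fin m, max (eigDesc hAB i - c) 0
        = ∑ i : Fin m, if (i : ℕ) < k then eigDesc hAB i - c else 0 :=
          Finset.sum_congr rfl (fun i _ => hmax i)
      _ = ∑ i ∈ Finset.univ.filter (fun i : Fin m => (i : ℕ) < k), (eigDesc hAB i - c) :=
          (Finset.sum_filter _ _).symm
      _ = ∑ i ∈ Finset.image (Fin.castLE hkm) Finset.univ, (eigDesc hAB i - c) := by rw [himg]
      _ = ∑ j : Fin k, (eigDesc hAB (Fin.castLE hkm j) - c) :=
          Finset.sum_image (fun a _ b _ h => Fin.castLE_injective hkm h)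
  calc ∑ j : Fin k, (eigDesc hA (ι j) - eigDesc hB (ι j))
      ≤ ∑ j : Fin k, (g (ι j) + c) := Finset.sum_le_sum (fun j _ => by
        have h1 := hstep1 (ι j); simp only [hg]; linarith)
    _ = ∑ j : Fin k, g (ι j) + k * c := by
        rw [Finset.sum_add_distrib, Finset.sum_const, Finset.card_univ, Fintype.card_fin,
          nsmul_eq_mul]
    _ ≤ ∑ i : Fin m, g i + k * c := by linarith [hsub]
    _ = Ep.trace + k * c := by rw [hgsum]
    _ = ∑ j : Fin k, (eigDesc hAB (Fin.castLE hkm j) - c) + k * c := by rw [htr2, hfin]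
    _ = ∑ j : Fin k, eigDesc hAB (Fin.castLE hkm j) := by
        rw [Finset.sum_sub_distrib, Finset.sum_const, Finset.card_univ, Fintype.card_fin,
          nsmul_eq_mul]
        ring
end

section
/- Eckart–Young (error form): for M ∈ ℝ^{N×m} with rank d and 0 ≤ k ≤ d, the minimum over all subspaces V ⊆ ℝ^N with dim V ≤ k of E(M,V) = Σ_{i=1}^m dist²(f_i, V) equals Σ_{j=k+1}^d λ_j(M^T M), where f_1,...,f_m are the columns of M and λ_1 ≥ ... ≥ λ_d > 0 are the positive eigenvalues of M^T M. -/
open Matrix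

/-- View a vector of `ℝ^N` as an element of Euclidean space. -/
def toE {N : ℕ} (x : Fin N → ℝ) : EuclideanSpace ℝ (Fin N) := WithLp.toLp 2 x

namespace EckartYoungAux

variable {E F : Type*} [NormedAddCommGroup E] [InnerProductSpace ℝ E]
  [NormedAddCommGroup F] [InnerProductSpace ℝ F]

lemma parseval {ι : Type*} [Fintype ι] (b : OrthonormalBasis ι ℝ E) (x : E) :
    ∑ i, (inner ℝ (b i) x : ℝ) ^ 2 = ‖x‖ ^ 2 := by
  have h := b.sum_inner_mul_inner x x
  rw [real_inner_self_eq_norm_sq] at h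
  rw [← h]
  refine Finset.sum_congr rfl fun i _ => ?_
  rw [sq, real_inner_comm x (b i)]

lemma sum_norm_sq_eq_adj [FiniteDimensional ℝ E] [FiniteDimensional ℝ F]
    {ι κ : Type*} [Fintype ι] [Fintype κ]
    (b : OrthonormalBasis ι ℝ E) (w : OrthonormalBasis κ ℝ F) (T : E →ₗ[ℝ] F) :
    ∑ i, ‖T (b i)‖ ^ 2 = ∑ t, ‖LinearMap.adjoint T (w t)‖ ^ 2 := by
  calc ∑ i, ‖T (b i)‖ ^ 2 = ∑ i, ∑ t, (inner ℝ (w t) (T (b i)) : ℝ) ^ 2 :=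
        Finset.sum_congr rfl fun i _ => (parseval w _).symm
    _ = ∑ t, ∑ i, (inner ℝ (b i) (LinearMap.adjoint T (w t)) : ℝ) ^ 2 := by
        rw [Finset.sum_comm]
        refine Finset.sum_congr rfl fun t _ => Finset.sum_congr rfl fun i _ => ?_
        rw [← LinearMap.adjoint_inner_left, real_inner_comm]
    _ = ∑ t, ‖LinearMap.adjoint T (w t)‖ ^ 2 :=
        Finset.sum_congr rfl fun t _ => parseval b _

/-- The Hilbert–Schmidt norm of a linear map does not depend on the chosen orthonormal basis. -/
lemma sum_norm_sq_basis_indep [FiniteDimensional ℝ E] [FiniteDimensional ℝ F]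
    {ι κ : Type*} [Fintype ι] [Fintype κ]
    (b : OrthonormalBasis ι ℝ E) (c : OrthonormalBasis κ ℝ E) (T : E →ₗ[ℝ] F) :
    ∑ i, ‖T (b i)‖ ^ 2 = ∑ j, ‖T (c j)‖ ^ 2 := by
  rw [sum_norm_sq_eq_adj b (stdOrthonormalBasis ℝ F) T,
    sum_norm_sq_eq_adj c (stdOrthonormalBasis ℝ F) T]

lemma infDist_sq_eq (V : Submodule ℝ E) [V.HasOrthogonalProjection] (x : E) :
    Metric.infDist x (V : Set E) ^ 2 = ‖x‖ ^ 2 - ‖(Submodule.orthogonalProjectionOnto V x : E)‖ ^ 2 := by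
  have h1 : Metric.infDist x (V : Set E) = ‖x - Submodule.orthogonalProjectionOnto V x‖ := by
    rw [Metric.infDist_eq_iInf]
    simp_rw [dist_eq_norm]
    exact (Submodule.starProjection_minimal x).symm
  have h2 : ‖x‖ ^ 2 = ‖(Submodule.orthogonalProjectionOnto V x : E)‖ ^ 2 +
      ‖(Submodule.orthogonalProjectionOnto Vᗮ x : E)‖ ^ 2 := Submodule.norm_sq_eq_add_norm_sq_projection x V
  have h3 : (Submodule.orthogonalProjectionOnto Vᗮ x : E) = x - Submodule.orthogonalProjectionOnto V x := by
    rw [Submodule.orthogonalProjection_orthogonal x]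
    rfl
  rw [h1, ← h3]
  linarith

lemma norm_sq_orthogonalProjection_le (V : Submodule ℝ E) [V.HasOrthogonalProjection] (x : E) :
    ‖(Submodule.orthogonalProjectionOnto V x : E)‖ ^ 2 ≤ ‖x‖ ^ 2 := by
  have h2 : ‖x‖ ^ 2 = ‖(Submodule.orthogonalProjectionOnto V x : E)‖ ^ 2 +
      ‖(Submodule.orthogonalProjectionOnto Vᗮ x : E)‖ ^ 2 := Submodule.norm_sq_eq_add_norm_sq_projection x V
  nlinarith [norm_nonneg ((Submodule.orthogonalProjectionOnto Vᗮ x : E))]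

lemma card_filter_lt_of_le {m t : ℕ} (h : t ≤ m) :
    (Finset.univ.filter fun j : Fin m => (j : ℕ) < t).card = t := by
  rcases eq_or_lt_of_le h with rfl | h
  · rw [Finset.filter_true_of_mem (fun j _ => j.isLt)]
    simp
  · have : (Finset.univ.filter fun j : Fin m => (j : ℕ) < t) = Finset.Iio ⟨t, h⟩ := by
      ext j
      simp [Fin.lt_def]
    rw [this, Fin.card_Iio]

lemma sum_mul_le_top {m k : ℕ} (lam t : Fin m → ℝ) (hanti : Antitone lam)
    (h0 : ∀ j, 0 ≤ lam j) (ht0 : ∀ j, 0 ≤ t j) (ht1 : ∀ j, t j ≤ 1)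
    (hsum : ∑ j, t j ≤ (k : ℝ)) :
    ∑ j, lam j * t j ≤ ∑ j ∈ Finset.univ.filter (fun j : Fin m => (j : ℕ) < k), lam j := by
  by_cases hkm : m ≤ k
  · have hfil : (Finset.univ.filter fun j : Fin m => (j : ℕ) < k) = Finset.univ :=
      Finset.filter_true_of_mem fun j _ => lt_of_lt_of_le j.isLt hkm
    rw [hfil]
    refine Finset.sum_le_sum fun j _ => ?_
    nlinarith [h0 j, ht1 j, ht0 j]
  · push_neg at hkm
    set K : Fin m := ⟨k, hkm⟩ with hK
    set c : ℝ := lam K with hc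
    have hc0 : 0 ≤ c := h0 K
    have hsplit := (Finset.sum_filter_add_sum_filter_not Finset.univ
      (fun j : Fin m => (j : ℕ) < k) (fun j => lam j * t j)).symm
    have h1 : ∑ j ∈ Finset.univ.filter (fun j : Fin m => (j : ℕ) < k), lam j * t j ≤
        ∑ j ∈ Finset.univ.filter (fun j : Fin m => (j : ℕ) < k), (lam j + c * t j - c) := by
      refine Finset.sum_le_sum fun j hj => ?_
      have hjk : (j : ℕ) < k := (Finset.mem_filter.1 hj).2
      have hlj : c ≤ lam j := hanti (show j ≤ K from le_of_lt (by exact hjk))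
      nlinarith [ht1 j]
    have h2 : ∑ j ∈ Finset.univ.filter (fun j : Fin m => ¬ (j : ℕ) < k), lam j * t j ≤
        ∑ j ∈ Finset.univ.filter (fun j : Fin m => ¬ (j : ℕ) < k), c * t j := by
      refine Finset.sum_le_sum fun j hj => ?_
      have hjk : ¬ (j : ℕ) < k := (Finset.mem_filter.1 hj).2
      have hlj : lam j ≤ c := hanti (show K ≤ j from le_of_not_gt (by exact hjk))
      nlinarith [ht0 j]
    have hcard : ((Finset.univ.filter fun j : Fin m => (j : ℕ) < k).card : ℝ) = k := by
      rw [card_filter_lt_of_le hkm.le]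
    have hts : ∑ j ∈ Finset.univ.filter (fun j : Fin m => (j : ℕ) < k), t j +
        ∑ j ∈ Finset.univ.filter (fun j : Fin m => ¬ (j : ℕ) < k), t j ≤ (k : ℝ) := by
      rw [Finset.sum_filter_add_sum_filter_not]
      exact hsum
    have hexp : ∑ j ∈ Finset.univ.filter (fun j : Fin m => (j : ℕ) < k), (lam j + c * t j - c)
        = ∑ j ∈ Finset.univ.filter (fun j : Fin m => (j : ℕ) < k), lam j
          + c * ∑ j ∈ Finset.univ.filter (fun j : Fin m => (j : ℕ) < k), t j - c * k := by
      rw [Finset.sum_sub_distrib, Finset.sum_add_distrib, Finset.mul_sum, Finset.sum_const,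
        nsmul_eq_mul, hcard, mul_comm c (k:ℝ)]
    have h2' : ∑ j ∈ Finset.univ.filter (fun j : Fin m => ¬ (j : ℕ) < k), c * t j
        = c * ∑ j ∈ Finset.univ.filter (fun j : Fin m => ¬ (j : ℕ) < k), t j := by
      rw [Finset.mul_sum]
    have hkey : ∑ j, lam j * t j ≤
        ∑ j ∈ Finset.univ.filter (fun j : Fin m => (j : ℕ) < k), lam j
          + c * (∑ j ∈ Finset.univ.filter (fun j : Fin m => (j : ℕ) < k), t j
            + ∑ j ∈ Finset.univ.filter (fun j : Fin m => ¬ (j : ℕ) < k), t j) - c * k := by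
      rw [← Finset.sum_filter_add_sum_filter_not Finset.univ
        (fun j : Fin m => (j : ℕ) < k) (fun j => lam j * t j)]
      rw [hexp] at h1
      rw [h2'] at h2
      rw [mul_add]
      linarith
    have := mul_le_mul_of_nonneg_left hts hc0
    linarith

lemma inner_eq_dot {n : ℕ} (x y : EuclideanSpace ℝ (Fin n)) :
    (inner ℝ x y : ℝ) = (x : Fin n → ℝ) ⬝ᵥ (y : Fin n → ℝ) := by
  simp [PiLp.inner_apply, RCLike.inner_apply, dotProduct, mul_comm]

lemma mulVec_dot {N m : ℕ} (M : Matrix (Fin N) (Fin m) ℝ) (a : Fin m → ℝ) (y : Fin N → ℝ) :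
    (M *ᵥ a) ⬝ᵥ y = a ⬝ᵥ (Mᵀ *ᵥ y) := by
  rw [← Matrix.vecMul_transpose, Matrix.dotProduct_mulVec]

end EckartYoungAux

open EckartYoungAux in
/-- Eckart–Young (error form): the minimum over subspaces `V` with `dim V ≤ k` of
`Σ_i dist²(f_i, V)` (the `f_i` being the columns of `M`) is attained and equals
`Σ_{j=k+1}^d λ_j(MᵀM)`, where `d = rank M` and eigenvalues are in decreasing order. -/
theorem eckart_young {N m k d : ℕ} (M : Matrix (Fin N) (Fin m) ℝ)
    (hH : (Mᵀ * M).IsHermitian) (hd : M.rank = d) (hkd : k ≤ d) :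
    IsLeast {e : ℝ | ∃ V : Submodule ℝ (EuclideanSpace ℝ (Fin N)),
        Module.finrank ℝ V ≤ k ∧
        e = ∑ i : Fin m, Metric.infDist (toE fun t => M t i) (V : Set (EuclideanSpace ℝ (Fin N))) ^ 2}
      (∑ j ∈ Finset.univ.filter (fun j : Fin m => k ≤ (j : ℕ) ∧ (j : ℕ) < d),
        eigDesc hH j) := by
  classical
  set A : Matrix (Fin m) (Fin m) ℝ := Mᵀ * M with hA
  set σ : Equiv.Perm (Fin m) := Tuple.sort (fun j => -hH.eigenvalues j) with hσ
  set lam : Fin m → ℝ := eigDesc hH with hlamdef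
  have hlam : ∀ j, lam j = hH.eigenvalues (σ j) := fun j => rfl
  set vB : OrthonormalBasis (Fin m) ℝ (EuclideanSpace ℝ (Fin m)) :=
    hH.eigenvectorBasis.reindex σ.symm with hvBdef
  have hvB : ∀ j, vB j = hH.eigenvectorBasis (σ j) := fun j => by
    rw [hvBdef, OrthonormalBasis.reindex_apply]; rfl
  have hAv : ∀ j, A *ᵥ (vB j) = lam j • (vB j) := fun j => by
    rw [hvB, hlam]; exact hH.mulVec_eigenvectorBasis (σ j)
  have hPSD : A.PosSemidef := by
    rw [hA, ← Matrix.conjTranspose_eq_transpose_of_trivial]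
    exact Matrix.posSemidef_conjTranspose_mul_self M
  have hnn : ∀ j, 0 ≤ lam j := fun j => hPSD.eigenvalues_nonneg (σ j)
  have hanti : Antitone lam := by
    intro a b hab
    have := Tuple.monotone_sort (fun j => -hH.eigenvalues j) hab
    simp only [Function.comp] at this
    rw [hlam a, hlam b]
    linarith [this]
  -- eigenvalue / inner product identities
  have hMvMv : ∀ i j, (inner ℝ (toE (M *ᵥ vB i)) (toE (M *ᵥ vB j)) : ℝ)
      = lam j * (inner ℝ (vB i) (vB j) : ℝ) := by
    intro i j
    rw [inner_eq_dot, inner_eq_dot]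
    have : (M *ᵥ (vB i : Fin m → ℝ)) ⬝ᵥ (M *ᵥ (vB j : Fin m → ℝ))
        = (vB i : Fin m → ℝ) ⬝ᵥ (A *ᵥ (vB j : Fin m → ℝ)) := by
      rw [mulVec_dot, Matrix.mulVec_mulVec, hA]
    rw [show ((toE (M *ᵥ vB i) : Fin N → ℝ)) = M *ᵥ (vB i : Fin m → ℝ) from rfl,
      show ((toE (M *ᵥ vB j) : Fin N → ℝ)) = M *ᵥ (vB j : Fin m → ℝ) from rfl, this, hAv j]
    rw [dotProduct_smul]
    rfl
  have hvBinner : ∀ i j, (inner ℝ (vB i) (vB j) : ℝ) = if i = j then 1 else 0 :=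
    fun i j => orthonormal_iff_ite.mp vB.orthonormal i j
  have hnormMv : ∀ j, ‖toE (M *ᵥ vB j)‖ ^ 2 = lam j := by
    intro j
    rw [← real_inner_self_eq_norm_sq, hMvMv j j, hvBinner, if_pos rfl, mul_one]
  -- characterization of d
  have hcard : Fintype.card {j : Fin m // lam j ≠ 0} = d := by
    have h1 : A.rank = d := by rw [hA, Matrix.rank_transpose_mul_self, hd]
    have h2 := hH.rank_eq_card_non_zero_eigs
    rw [h1] at h2
    refine Eq.trans (Fintype.card_congr (Equiv.subtypeEquiv σ ?_)) h2.symm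
    intro j
    rw [hlam j]
  have hSd : (Finset.univ.filter fun j : Fin m => lam j ≠ 0).card = d := by
    rw [← hcard, Fintype.card_subtype]
  have hdown : ∀ {i j : Fin m}, i ≤ j → lam j ≠ 0 → lam i ≠ 0 := by
    intro i j hij hj
    have h1 : 0 < lam j := lt_of_le_of_ne (hnn j) (Ne.symm hj)
    exact ne_of_gt (lt_of_lt_of_le h1 (hanti hij))
  have hlt : ∀ j : Fin m, lam j ≠ 0 ↔ (j : ℕ) < d := by
    intro j
    constructor
    · intro hj
      by_contra hdj
      push_neg at hdj
      have hsub : Finset.Iic j ⊆ Finset.univ.filter fun i : Fin m => lam i ≠ 0 := by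
        intro i hi
        simp only [Finset.mem_Iic] at hi
        simp only [Finset.mem_filter, Finset.mem_univ, true_and]
        exact hdown hi hj
      have hcle := Finset.card_le_card hsub
      rw [Fin.card_Iic, hSd] at hcle
      omega
    · intro hj
      by_contra hlj
      have hsub : (Finset.univ.filter fun i : Fin m => lam i ≠ 0) ⊆ Finset.Iio j := by
        intro i hi
        simp only [Finset.mem_filter, Finset.mem_univ, true_and] at hi
        simp only [Finset.mem_Iio]
        by_contra hij
        push_neg at hij
        exact hi (le_antisymm (hlj ▸ hanti hij) (hnn i))
      have hcle := Finset.card_le_card hsub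
      rw [Fin.card_Iio, hSd] at hcle
      omega
  have hdm : d ≤ m := by
    have h := Finset.card_filter_le Finset.univ (fun j : Fin m => lam j ≠ 0)
    rw [hSd] at h
    simpa using h
  -- columns and the linear map
  set Tlin : EuclideanSpace ℝ (Fin m) →ₗ[ℝ] EuclideanSpace ℝ (Fin N) := toEuclideanLin M
    with hTlin
  have hTe : ∀ i, Tlin (EuclideanSpace.basisFun (Fin m) ℝ i) = toE (fun t => M t i) := by
    intro i
    ext t
    simp [hTlin, toEuclideanLin_apply, EuclideanSpace.basisFun_apply, toE, Matrix.mulVec_single]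
  have hTv : ∀ j, Tlin (vB j) = toE (M *ᵥ vB j) := fun j => rfl
  have hsum_f : ∑ i, ‖toE (fun t => M t i)‖ ^ 2 = ∑ j, lam j := by
    calc ∑ i, ‖toE (fun t => M t i)‖ ^ 2
        = ∑ i, ‖Tlin (EuclideanSpace.basisFun (Fin m) ℝ i)‖ ^ 2 := by
          exact Finset.sum_congr rfl fun i _ => by rw [hTe]
      _ = ∑ j, ‖Tlin (vB j)‖ ^ 2 :=
          sum_norm_sq_basis_indep (EuclideanSpace.basisFun (Fin m) ℝ) vB Tlin
      _ = ∑ j, lam j := Finset.sum_congr rfl fun j _ => by rw [hTv, hnormMv]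
  -- the orthonormal family u
  set u : Fin m → EuclideanSpace ℝ (Fin N) :=
    fun j => (Real.sqrt (lam j))⁻¹ • toE (M *ᵥ vB j) with hu
  have hMu : ∀ j : Fin m, (j : ℕ) < d → toE (M *ᵥ vB j) = Real.sqrt (lam j) • u j := by
    intro j hj
    have hpos : 0 < lam j := lt_of_le_of_ne (hnn j) (Ne.symm ((hlt j).2 hj))
    rw [hu]
    rw [smul_smul, mul_inv_cancel₀ (Real.sqrt_ne_zero'.2 hpos), one_smul]
  have hu_inner : ∀ i j : Fin m, (i : ℕ) < d → (j : ℕ) < d →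
      (inner ℝ (u i) (u j) : ℝ) = if i = j then 1 else 0 := by
    intro i j hi hj
    rw [hu]
    simp only [real_inner_smul_left, real_inner_smul_right]
    rw [hMvMv i j, hvBinner i j]
    by_cases h : i = j
    · subst h
      rw [if_pos rfl, mul_one]
      have hpos : 0 < lam i := lt_of_le_of_ne (hnn i) (Ne.symm ((hlt i).2 hi))
      have hs : Real.sqrt (lam i) * Real.sqrt (lam i) = lam i := Real.mul_self_sqrt (hnn i)
      have hsne : Real.sqrt (lam i) ≠ 0 := Real.sqrt_ne_zero'.2 hpos
      field_simp
      rw [sq, hs]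
    · rw [if_neg h, mul_zero, mul_zero, mul_zero]
  have hu_norm : ∀ j : Fin m, (j : ℕ) < d → ‖u j‖ ^ 2 = 1 := fun j hj => by
    rw [← real_inner_self_eq_norm_sq, hu_inner j j hj hj, if_pos rfl]
  -- inner products of u with the columns
  have hcol : ∀ i : Fin m, (toE (fun t => M t i) : Fin N → ℝ) = M *ᵥ Pi.single i 1 := by
    intro i
    funext t
    simp [toE, Matrix.mulVec_single]
  have hcu : ∀ j i, (inner ℝ (u j) (toE fun t => M t i) : ℝ)
      = (Real.sqrt (lam j))⁻¹ * (lam j * (vB j : Fin m → ℝ) i) := by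
    intro j i
    rw [hu]
    simp only [real_inner_smul_left]
    congr 1
    rw [inner_eq_dot]
    rw [show ((toE (M *ᵥ vB j) : Fin N → ℝ)) = M *ᵥ (vB j : Fin m → ℝ) from rfl, hcol i]
    rw [dotProduct_comm, mulVec_dot, Matrix.mulVec_mulVec, ← hA, hAv j]
    rw [dotProduct_smul]
    simp [single_dotProduct]
  have hsum_cu : ∀ j : Fin m, (j : ℕ) < d →
      ∑ i, (inner ℝ (u j) (toE fun t => M t i) : ℝ) ^ 2 = lam j := by
    intro j hj
    have hpos : 0 < lam j := lt_of_le_of_ne (hnn j) (Ne.symm ((hlt j).2 hj))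
    have hvnorm : ∑ i, ((vB j : Fin m → ℝ) i) ^ 2 = 1 := by
      have h1 : (inner ℝ (vB j) (vB j) : ℝ) = 1 := by rw [hvBinner, if_pos rfl]
      rw [inner_eq_dot] at h1
      rw [← h1]
      simp [dotProduct, sq]
    calc ∑ i, (inner ℝ (u j) (toE fun t => M t i) : ℝ) ^ 2
        = ∑ i, ((Real.sqrt (lam j))⁻¹ * (lam j * (vB j : Fin m → ℝ) i)) ^ 2 :=
          Finset.sum_congr rfl fun i _ => by rw [hcu]
      _ = ((Real.sqrt (lam j))⁻¹ * lam j) ^ 2 * ∑ i, ((vB j : Fin m → ℝ) i) ^ 2 := by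
          rw [Finset.mul_sum]
          exact Finset.sum_congr rfl fun i _ => by ring
      _ = lam j := by
          rw [hvnorm, mul_one]
          have hs : Real.sqrt (lam j) ^ 2 = lam j := Real.sq_sqrt (hnn j)
          have hsne : Real.sqrt (lam j) ≠ 0 := Real.sqrt_ne_zero'.2 hpos
          field_simp
          rw [hs]
  -- the target sum identity
  have htarget : ∑ j ∈ Finset.univ.filter (fun j : Fin m => k ≤ (j : ℕ) ∧ (j : ℕ) < d), lam j
      = ∑ j, lam j - ∑ j ∈ Finset.univ.filter (fun j : Fin m => (j : ℕ) < k), lam j := by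
    have hsub : (Finset.univ.filter fun j : Fin m => k ≤ (j : ℕ) ∧ (j : ℕ) < d)
        ⊆ Finset.univ.filter fun j : Fin m => ¬ (j : ℕ) < k := by
      intro j hj
      simp only [Finset.mem_filter, Finset.mem_univ, true_and] at hj ⊢
      omega
    have hzero : ∀ j ∈ (Finset.univ.filter fun j : Fin m => ¬ (j : ℕ) < k) \
        (Finset.univ.filter fun j : Fin m => k ≤ (j : ℕ) ∧ (j : ℕ) < d), lam j = 0 := by
      intro j hj
      simp only [Finset.mem_sdiff, Finset.mem_filter, Finset.mem_univ, true_and] at hj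
      have : ¬ (j : ℕ) < d := by omega
      exact not_not.mp (fun hne => this ((hlt j).1 hne))
    have heq := Finset.sum_subset hsub (fun j _ hj => hzero j (Finset.mem_sdiff.2 ⟨‹_›, hj⟩))
    rw [heq]
    have := Finset.sum_filter_add_sum_filter_not Finset.univ
      (fun j : Fin m => (j : ℕ) < k) lam
    linarith
  -- lower bound
  have lowb : ∀ V : Submodule ℝ (EuclideanSpace ℝ (Fin N)), Module.finrank ℝ V ≤ k →
      ∑ j ∈ Finset.univ.filter (fun j : Fin m => k ≤ (j : ℕ) ∧ (j : ℕ) < d), lam j ≤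
        ∑ i, Metric.infDist (toE fun t => M t i) (V : Set (EuclideanSpace ℝ (Fin N))) ^ 2 := by
    intro V hV
    have hproj : ∑ i, Metric.infDist (toE fun t => M t i)
          (V : Set (EuclideanSpace ℝ (Fin N))) ^ 2
        = ∑ j, lam j - ∑ i, ‖(Submodule.orthogonalProjectionOnto V (toE fun t => M t i) :
            EuclideanSpace ℝ (Fin N))‖ ^ 2 := by
      rw [← hsum_f, ← Finset.sum_sub_distrib]
      exact Finset.sum_congr rfl fun i _ => infDist_sq_eq V _
    rw [hproj, htarget]
    have hmain : ∑ i, ‖(Submodule.orthogonalProjectionOnto V (toE fun t => M t i) :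
          EuclideanSpace ℝ (Fin N))‖ ^ 2
        ≤ ∑ j ∈ Finset.univ.filter (fun j : Fin m => (j : ℕ) < k), lam j := by
      set T : EuclideanSpace ℝ (Fin m) →ₗ[ℝ] EuclideanSpace ℝ (Fin N) :=
        (V.subtype ∘ₗ (Submodule.orthogonalProjectionOnto V).toLinearMap) ∘ₗ Tlin with hT
      have hTx : ∀ x, T x = (Submodule.orthogonalProjectionOnto V (Tlin x) : EuclideanSpace ℝ (Fin N)) :=
        fun x => rfl
      set tv : Fin m → ℝ := fun j => if (j : ℕ) < d
        then ‖(Submodule.orthogonalProjectionOnto V (u j) : EuclideanSpace ℝ (Fin N))‖ ^ 2 else 0 with htv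
      have h1 : ∑ i, ‖(Submodule.orthogonalProjectionOnto V (toE fun t => M t i) :
            EuclideanSpace ℝ (Fin N))‖ ^ 2 = ∑ j, ‖T (vB j)‖ ^ 2 := by
        rw [← sum_norm_sq_basis_indep (EuclideanSpace.basisFun (Fin m) ℝ) vB T]
        refine Finset.sum_congr rfl fun i _ => ?_
        rw [hTx, hTe]
      have h2 : ∀ j, ‖T (vB j)‖ ^ 2 = lam j * tv j := by
        intro j
        by_cases hj : (j : ℕ) < d
        · rw [hTx, hTv, hMu j hj, _root_.map_smul, Submodule.coe_smul, norm_smul, mul_pow,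
            Real.norm_eq_abs, sq_abs, Real.sq_sqrt (hnn j)]
          rw [htv]
          simp only [if_pos hj]
        · have hlam0 : lam j = 0 := not_not.mp (fun hne => hj ((hlt j).1 hne))
          have hMv0 : toE (M *ᵥ vB j) = 0 := by
            have hn := hnormMv j
            rw [hlam0, pow_eq_zero_iff (two_ne_zero)] at hn
            exact norm_eq_zero.mp hn
          rw [hTx, hTv, hMv0, map_zero, hlam0]
          simp
      have htv0 : ∀ j, 0 ≤ tv j := by
        intro j
        rw [htv]
        dsimp only
        split
        · positivity
        · exact le_refl 0
      have htv1 : ∀ j, tv j ≤ 1 := by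
        intro j
        rw [htv]
        dsimp only
        split
        · rename_i hj
          exact le_trans (norm_sq_orthogonalProjection_le V (u j)) (le_of_eq (hu_norm j hj))
        · norm_num
      have hbessel : ∑ j, tv j ≤ (k : ℝ) := by
        set w := stdOrthonormalBasis ℝ V with hw
        have hwE : ∀ t, ‖(w t : EuclideanSpace ℝ (Fin N))‖ = 1 := fun t => w.orthonormal.1 t
        have hptu : ∀ j : Fin m, (j : ℕ) < d →
            ‖(Submodule.orthogonalProjectionOnto V (u j) : EuclideanSpace ℝ (Fin N))‖ ^ 2
              = ∑ t, (inner ℝ ((w t : EuclideanSpace ℝ (Fin N))) (u j) : ℝ) ^ 2 := by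
          intro j hj
          rw [show ‖(Submodule.orthogonalProjectionOnto V (u j) : EuclideanSpace ℝ (Fin N))‖
            = ‖Submodule.orthogonalProjectionOnto V (u j)‖ from rfl]
          rw [← parseval w (Submodule.orthogonalProjectionOnto V (u j))]
          refine Finset.sum_congr rfl fun t _ => ?_
          rw [Submodule.inner_orthogonalProjection_eq_of_mem_left]
        have huon : Orthonormal ℝ (fun j : {j : Fin m // (j : ℕ) < d} => u (j : Fin m)) := by
          rw [orthonormal_iff_ite]
          intro i j
          rw [hu_inner (i : Fin m) (j : Fin m) i.2 j.2]
          by_cases h : (i : Fin m) = (j : Fin m)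
          · rw [if_pos h, if_pos (Subtype.ext h)]
          · rw [if_neg h, if_neg (fun hc => h (congrArg Subtype.val hc))]
        have hb2 : ∀ t, ∑ j ∈ Finset.univ.filter (fun j : Fin m => (j : ℕ) < d),
            (inner ℝ ((w t : EuclideanSpace ℝ (Fin N))) (u j) : ℝ) ^ 2 ≤ 1 := by
          intro t
          have hBessel := huon.sum_inner_products_le (s := Finset.univ)
            ((w t : EuclideanSpace ℝ (Fin N)))
          rw [hwE t, one_pow] at hBessel
          refine le_trans (le_of_eq ?_) hBessel
          rw [Finset.sum_subtype (p := fun j : Fin m => (j : ℕ) < d) _ (fun x => by simp)]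
          refine Finset.sum_congr rfl fun j _ => ?_
          rw [Real.norm_eq_abs, sq_abs, real_inner_comm]
        have e1 : ∑ j, tv j = ∑ j ∈ Finset.univ.filter (fun j : Fin m => (j : ℕ) < d),
            ‖(Submodule.orthogonalProjectionOnto V (u j) : EuclideanSpace ℝ (Fin N))‖ ^ 2 := by
          rw [Finset.sum_filter]
        rw [e1]
        calc ∑ j ∈ Finset.univ.filter (fun j : Fin m => (j : ℕ) < d),
              ‖(Submodule.orthogonalProjectionOnto V (u j) : EuclideanSpace ℝ (Fin N))‖ ^ 2
            = ∑ j ∈ Finset.univ.filter (fun j : Fin m => (j : ℕ) < d),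
              ∑ t, (inner ℝ ((w t : EuclideanSpace ℝ (Fin N))) (u j) : ℝ) ^ 2 :=
              Finset.sum_congr rfl fun j hj => hptu j (by
                simpa using (Finset.mem_filter.1 hj).2)
          _ = ∑ t, ∑ j ∈ Finset.univ.filter (fun j : Fin m => (j : ℕ) < d),
              (inner ℝ ((w t : EuclideanSpace ℝ (Fin N))) (u j) : ℝ) ^ 2 := Finset.sum_comm
          _ ≤ ∑ _t : Fin (Module.finrank ℝ V), (1 : ℝ) := Finset.sum_le_sum fun t _ => hb2 t
          _ = (Module.finrank ℝ V : ℝ) := by simp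
          _ ≤ (k : ℝ) := Nat.cast_le.2 hV
      calc ∑ i, ‖(Submodule.orthogonalProjectionOnto V (toE fun t => M t i) :
            EuclideanSpace ℝ (Fin N))‖ ^ 2
          = ∑ j, ‖T (vB j)‖ ^ 2 := h1
        _ = ∑ j, lam j * tv j := Finset.sum_congr rfl fun j _ => h2 j
        _ ≤ ∑ j ∈ Finset.univ.filter (fun j : Fin m => (j : ℕ) < k), lam j :=
            sum_mul_le_top lam tv hanti hnn htv0 htv1 hbessel
    linarith [hmain]
  constructor
  · set Fk := Finset.univ.filter (fun j : Fin m => (j : ℕ) < k) with hFk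
    set V₀ : Submodule ℝ (EuclideanSpace ℝ (Fin N)) :=
      Submodule.span ℝ ((Fk.image u : Finset _) : Set (EuclideanSpace ℝ (Fin N))) with hV₀
    have hrank0 : Module.finrank ℝ V₀ ≤ k := by
      refine le_trans (finrank_span_finset_le_card _) (le_trans Finset.card_image_le ?_)
      rw [hFk, card_filter_lt_of_le (le_trans hkd hdm)]
    have hFkd : ∀ j ∈ Fk, (j : ℕ) < d := by
      intro j hj
      rw [hFk] at hj
      exact lt_of_lt_of_le (by simpa using (Finset.mem_filter.1 hj).2) hkd
    have hupper : ∑ i, Metric.infDist (toE fun t => M t i)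
          (V₀ : Set (EuclideanSpace ℝ (Fin N))) ^ 2
        ≤ ∑ j ∈ Finset.univ.filter (fun j : Fin m => k ≤ (j : ℕ) ∧ (j : ℕ) < d), lam j := by
      have hle : ∀ i : Fin m, Metric.infDist (toE fun t => M t i)
            (V₀ : Set (EuclideanSpace ℝ (Fin N))) ^ 2
          ≤ ‖toE (fun t => M t i)‖ ^ 2
            - ∑ j ∈ Fk, (inner ℝ (u j) (toE fun t => M t i) : ℝ) ^ 2 := by
        intro i
        set f : EuclideanSpace ℝ (Fin N) := toE (fun t => M t i) with hf
        set y : EuclideanSpace ℝ (Fin N) := ∑ j ∈ Fk, (inner ℝ (u j) f : ℝ) • u j with hy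
        have hyV : y ∈ V₀ := by
          rw [hy, hV₀]
          exact Submodule.sum_mem _ fun j hj => Submodule.smul_mem _ _
            (Submodule.subset_span (Finset.mem_coe.2 (Finset.mem_image_of_mem u hj)))
        have h1 : Metric.infDist f (V₀ : Set (EuclideanSpace ℝ (Fin N))) ≤ ‖f - y‖ := by
          rw [← dist_eq_norm]
          exact Metric.infDist_le_dist_of_mem hyV
        have hfy : (inner ℝ f y : ℝ) = ∑ j ∈ Fk, (inner ℝ (u j) f : ℝ) ^ 2 := by
          rw [hy, inner_sum]
          refine Finset.sum_congr rfl fun j hj => ?_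
          rw [real_inner_smul_right, real_inner_comm, sq]
        have hinyu : ∀ j ∈ Fk, (inner ℝ y (u j) : ℝ) = (inner ℝ (u j) f : ℝ) := by
          intro j hj
          have hjd : (j : ℕ) < d := hFkd j hj
          rw [hy, sum_inner, Finset.sum_eq_single j]
          · rw [real_inner_smul_left, hu_inner j j hjd hjd, if_pos rfl, mul_one]
          · intro b hb hbj
            rw [real_inner_smul_left, hu_inner b j (hFkd b hb) hjd, if_neg hbj, mul_zero]
          · intro hcontra
            exact absurd hj hcontra
        have hyy : (inner ℝ y y : ℝ) = ∑ j ∈ Fk, (inner ℝ (u j) f : ℝ) ^ 2 := by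
          nth_rewrite 2 [hy]
          rw [inner_sum]
          refine Finset.sum_congr rfl fun j hj => ?_
          rw [real_inner_smul_right, hinyu j hj, sq]
        have h2 : ‖f - y‖ ^ 2 = ‖f‖ ^ 2 - ∑ j ∈ Fk, (inner ℝ (u j) f : ℝ) ^ 2 := by
          have hyn : ‖y‖ ^ 2 = ∑ j ∈ Fk, (inner ℝ (u j) f : ℝ) ^ 2 := by
            rw [← real_inner_self_eq_norm_sq, hyy]
          rw [norm_sub_sq_real, hyn, hfy]
          ring
        have h0 : 0 ≤ Metric.infDist f (V₀ : Set (EuclideanSpace ℝ (Fin N))) :=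
          Metric.infDist_nonneg
        calc Metric.infDist f (V₀ : Set (EuclideanSpace ℝ (Fin N))) ^ 2
            ≤ ‖f - y‖ ^ 2 := pow_le_pow_left₀ h0 h1 2
          _ = ‖f‖ ^ 2 - ∑ j ∈ Fk, (inner ℝ (u j) f : ℝ) ^ 2 := h2
      calc ∑ i, Metric.infDist (toE fun t => M t i)
            (V₀ : Set (EuclideanSpace ℝ (Fin N))) ^ 2
          ≤ ∑ i, (‖toE (fun t => M t i)‖ ^ 2
            - ∑ j ∈ Fk, (inner ℝ (u j) (toE fun t => M t i) : ℝ) ^ 2) :=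
            Finset.sum_le_sum fun i _ => hle i
        _ = ∑ j, lam j - ∑ j ∈ Fk, lam j := by
            rw [Finset.sum_sub_distrib, hsum_f, Finset.sum_comm]
            congr 1
            refine Finset.sum_congr rfl fun j hj => ?_
            exact hsum_cu j (hFkd j hj)
        _ = ∑ j ∈ Finset.univ.filter (fun j : Fin m => k ≤ (j : ℕ) ∧ (j : ℕ) < d), lam j := by
            rw [htarget, hFk]
    exact ⟨V₀, hrank0, le_antisymm (lowb V₀ hrank0) hupper⟩
  · rintro e ⟨V, hV, rfl⟩
    exact lowb V hV
end

section
/- Let F = {f_1,...,f_m} be a finite subset of a (possibly infinite-dimensional) real Hilbert space H, and let l, k be positive integers. Then there exists a bundle B₀ = {V_1⁰,...,V_l⁰} of closed subspaces of H with dim(V_i⁰) ≤ k attaining the infimum e₀(F) = inf{e(F,B) : B a bundle of l subspaces of dimension ≤ k}, and moreover each V_i⁰ can be taken inside span{f_1,...,f_m}. -/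
open Metric Module Submodule Set
open scoped RealInnerProductSpace

section Aux

variable {H : Type*} [NormedAddCommGroup H] [InnerProductSpace ℝ H]

/-- helper: infimum over `Fin l` equals `Finset.inf'`. -/
lemma ciInf_fin_eq_inf' {l : ℕ} [Nonempty (Fin l)] (f : Fin l → ℝ) :
    (⨅ j, f j) = Finset.univ.inf' Finset.univ_nonempty f := by
  rw [Finset.inf'_eq_csInf_image]
  simp [iInf, Set.image_univ]

/-- distance (squared) from a point to the span of an orthonormal family. -/
lemma infDist_sq_span_orthonormal {k : ℕ} {e : Fin k → H} (he : Orthonormal ℝ e) (f : H) :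
    infDist f (span ℝ (Set.range e) : Set H) ^ 2 = ‖f‖ ^ 2 - ∑ t, (inner ℝ f (e t) : ℝ) ^ 2 := by
  classical
  set q : H := ∑ t, (inner ℝ f (e t) : ℝ) • e t with hq
  have hqmem : q ∈ span ℝ (Set.range e) :=
    Submodule.sum_mem _ fun t _ => Submodule.smul_mem _ _ (subset_span (mem_range_self t))
  have horth : ∀ w ∈ span ℝ (Set.range e), (inner ℝ (f - q) w : ℝ) = 0 := by
    intro w hw
    have hgen : Set.range e ⊆ (LinearMap.ker ((innerSL ℝ (f - q) : H →L[ℝ] ℝ) : H →ₗ[ℝ] ℝ) : Set H) := by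
      rintro x ⟨s, rfl⟩
      have h1 : (inner ℝ q (e s) : ℝ) = (inner ℝ f (e s) : ℝ) := by
        rw [hq, sum_inner]
        have : ∀ t, (inner ℝ ((inner ℝ f (e t) : ℝ) • e t) (e s) : ℝ) = (inner ℝ f (e t) : ℝ) * (inner ℝ (e t) (e s) : ℝ) := fun t => by
          rw [real_inner_smul_left]
        rw [Finset.sum_congr rfl fun t _ => this t]
        simp [orthonormal_iff_ite.1 he]
      simp only [SetLike.mem_coe, LinearMap.mem_ker, ContinuousLinearMap.coe_coe, innerSL_apply_apply]
      rw [inner_sub_left, h1, sub_self]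
    have := Submodule.span_le.2 hgen hw
    simpa [inner_sub_left] using this
  have hW : infDist f (span ℝ (Set.range e) : Set H) = ‖f - q‖ := by
    rw [Metric.infDist_eq_iInf]
    simp_rw [dist_eq_norm]
    exact ((norm_eq_iInf_iff_real_inner_eq_zero _ hqmem).2 horth).symm
  have hfq : (inner ℝ f q : ℝ) = ∑ t, (inner ℝ f (e t) : ℝ) ^ 2 := by
    rw [hq, inner_sum]
    refine Finset.sum_congr rfl fun t _ => ?_
    rw [real_inner_smul_right]; ring
  have hqq : ‖q‖ ^ 2 = ∑ t, (inner ℝ f (e t) : ℝ) ^ 2 := by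
    rw [← real_inner_self_eq_norm_sq, hq, inner_sum]
    refine Finset.sum_congr rfl fun t _ => ?_
    rw [real_inner_smul_right, sum_inner]
    have : ∀ s, (inner ℝ ((inner ℝ f (e s) : ℝ) • e s) (e t) : ℝ) = (inner ℝ f (e s) : ℝ) * (inner ℝ (e s) (e t) : ℝ) := fun s => by
      rw [real_inner_smul_left]
    rw [Finset.sum_congr rfl fun s _ => this s]
    simp [orthonormal_iff_ite.1 he]
    ring
  rw [hW, norm_sub_sq_real, hfq, hqq]
  ring

/-- a contraction-type monotonicity for `infDist`. -/
lemma infDist_le_of_forall_exists {x : H} {A B : Set H} (hA : A.Nonempty)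
    (h : ∀ w ∈ A, ∃ w' ∈ B, dist x w' ≤ dist x w) : infDist x B ≤ infDist x A := by
  by_contra hlt
  push_neg at hlt
  obtain ⟨w, hw, hwd⟩ := (Metric.infDist_lt_iff hA).1 hlt
  obtain ⟨w', hw', hle⟩ := h w hw
  exact absurd ((Metric.infDist_le_dist_of_mem hw').trans hle) (not_le.2 hwd)

/-- any subspace of dimension at most `k` in a finite-dimensional inner product space is
contained in the span of an orthonormal `k`-frame. -/
lemma exists_orthonormal_frame_ge {E : Type*} [NormedAddCommGroup E] [InnerProductSpace ℝ E]
    [FiniteDimensional ℝ E] {k : ℕ} (hk : k ≤ finrank ℝ E) (W : Submodule ℝ E)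
    (hW : finrank ℝ W ≤ k) :
    ∃ e : Fin k → E, Orthonormal ℝ e ∧ W ≤ span ℝ (Set.range e) := by
  classical
  set d := finrank ℝ W with hd
  let b := stdOrthonormalBasis ℝ W
  let v : Fin d → E := fun t => (b t : E)
  have hv : Orthonormal ℝ v := b.orthonormal.comp_linearIsometry W.subtypeₗᵢ
  have hWspan : W = span ℝ (Set.range v) := by
    have h1 : Set.range v = W.subtype '' Set.range ⇑b := by
      rw [← Set.range_comp]; rfl
    rw [h1, ← Submodule.map_span, ← b.coe_toBasis, b.toBasis.span_eq, Submodule.map_subtype_top]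
  set n := finrank ℝ E with hn
  let v' : Fin n → E := fun i => if h : (i : ℕ) < d then v ⟨i, h⟩ else 0
  have hdn : d ≤ n := le_trans hW hk
  have hv' : Orthonormal ℝ (({i : Fin n | (i : ℕ) < d} : Set (Fin n)).restrict v') := by
    have hemb : Function.Injective
        (fun i : ({i : Fin n | (i : ℕ) < d} : Set (Fin n)) => (⟨i.1, i.2⟩ : Fin d)) := by
      rintro ⟨i, hi⟩ ⟨j, hj⟩ hij
      simp only [Fin.mk.injEq] at hij
      exact Subtype.ext (Fin.ext hij)
    have := hv.comp _ hemb
    convert this using 1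
    funext i
    simp only [Set.restrict_apply, Function.comp_apply, v']
    exact dif_pos i.2
  obtain ⟨b', hb'⟩ := hv'.exists_orthonormalBasis_extension_of_card_eq (by simp [hn])
  refine ⟨fun t => b' (Fin.castLE hk t), b'.orthonormal.comp _ ?_, ?_⟩
  · intro a c hac
    simpa [Fin.ext_iff] using congrArg Fin.val hac
  · rw [hWspan]
    apply Submodule.span_le.2
    rintro x ⟨t, rfl⟩
    have ht : (t : ℕ) < d := t.2
    have htk : (t : ℕ) < k := lt_of_lt_of_le ht hW
    have hmem : (⟨(t : ℕ), lt_of_lt_of_le ht hdn⟩ : Fin n) ∈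
        {i : Fin n | (i : ℕ) < d} := ht
    have : v t = b' (Fin.castLE hk ⟨(t : ℕ), htk⟩) := by
      have h2 := hb' _ hmem
      have h3 : v' (⟨(t : ℕ), lt_of_lt_of_le ht hdn⟩ : Fin n) = v t := by
        simp only [v']
        rw [dif_pos ht]
      rw [show Fin.castLE hk (⟨(t : ℕ), htk⟩ : Fin k) =
        (⟨(t : ℕ), lt_of_lt_of_le ht hdn⟩ : Fin n) from rfl, h2, h3]
    rw [this]
    exact subset_span (mem_range_self _)

end Aux

/-- Existence of an optimal bundle (Theorem 2.2 / \cite{ACM08}): for a finite data set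
`F` in a real Hilbert space `H` and positive integers `l, k`, there is a bundle of `l`
closed subspaces of dimension at most `k`, each contained in the span of the data,
attaining the infimum `e₀(F)` of `e(F,B) = Σ_i min_j dist²(f_i, V_j)` over all bundles. -/
theorem exists_optimal_bundle {H : Type*} [NormedAddCommGroup H]
    [InnerProductSpace ℝ H] [CompleteSpace H]
    {m l k : ℕ} (hl : 0 < l) (hk : 0 < k) (F : Fin m → H) :
    ∃ V : Fin l → Submodule ℝ H,
      (∀ i, FiniteDimensional ℝ (V i)) ∧
      (∀ i, IsClosed (V i : Set H)) ∧
      (∀ i, Module.finrank ℝ (V i) ≤ k) ∧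
      (∀ i, V i ≤ Submodule.span ℝ (Set.range F)) ∧
      (∑ i, ⨅ j, Metric.infDist (F i) (V j : Set H) ^ 2) =
        sInf {e : ℝ | ∃ W : Fin l → Submodule ℝ H,
          (∀ i, FiniteDimensional ℝ (W i)) ∧
          (∀ i, Module.finrank ℝ (W i) ≤ k) ∧
          e = ∑ i, ⨅ j, Metric.infDist (F i) (W j : Set H) ^ 2} := by
  classical
  haveI : Nonempty (Fin l) := ⟨⟨0, hl⟩⟩
  set E : Submodule ℝ H := Submodule.span ℝ (Set.range F) with hE
  haveI : FiniteDimensional ℝ E := FiniteDimensional.span_of_finite ℝ (Set.finite_range F)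
  haveI : CompleteSpace E := FiniteDimensional.complete ℝ E
  set S : Set ℝ := {e : ℝ | ∃ W : Fin l → Submodule ℝ H,
    (∀ i, FiniteDimensional ℝ (W i)) ∧
    (∀ i, Module.finrank ℝ (W i) ≤ k) ∧
    e = ∑ i, ⨅ j, Metric.infDist (F i) (W j : Set H) ^ 2} with hS
  have hS0 : ∀ x ∈ S, (0 : ℝ) ≤ x := by
    rintro x ⟨W, -, -, rfl⟩
    refine Finset.sum_nonneg fun i _ => Real.iInf_nonneg fun j => sq_nonneg _
  have hFE : ∀ i, F i ∈ E := fun i => subset_span (mem_range_self i)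
  by_cases hkE : finrank ℝ E < k
  · -- easy case : take every subspace to be E itself
    have hval : (∑ i, ⨅ j : Fin l, Metric.infDist (F i) (E : Set H) ^ 2) = 0 := by
      refine Finset.sum_eq_zero fun i _ => ?_
      have : Metric.infDist (F i) (E : Set H) = 0 := Metric.infDist_zero_of_mem (hFE i)
      simp [this]
    have hmem : (0 : ℝ) ∈ S := by
      refine ⟨fun _ => E, fun _ => inferInstance, fun _ => le_of_lt hkE, ?_⟩
      rw [hval]
    refine ⟨fun _ => E, fun _ => inferInstance,
      fun _ => Submodule.closed_of_finiteDimensional E,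
      fun _ => le_of_lt hkE, fun _ => le_rfl, ?_⟩
    rw [hval]
    exact le_antisymm (le_csInf ⟨0, hmem⟩ hS0) (csInf_le ⟨0, hS0⟩ hmem)
  · push_neg at hkE
    set n := finrank ℝ E with hn
    -- compact domain of orthonormal frames
    set X : Set (Fin l → Fin k → E) := {e | ∀ j, Orthonormal ℝ (e j)} with hX
    have hXclosed : IsClosed X := by
      have : X = ⋂ (j : Fin l) (t : Fin k) (s : Fin k),
          {e : Fin l → Fin k → E | (inner ℝ (e j t) (e j s) : ℝ) = if t = s then (1 : ℝ) else 0} := by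
        ext e
        simp only [hX, Set.mem_setOf_eq, Set.mem_iInter, orthonormal_iff_ite]
      rw [this]
      refine isClosed_iInter fun j => isClosed_iInter fun t => isClosed_iInter fun s => ?_
      exact isClosed_eq (Continuous.inner
        ((continuous_apply t).comp (continuous_apply j))
        ((continuous_apply s).comp (continuous_apply j))) continuous_const
    have hXcompact : IsCompact X := by
      rw [Metric.isCompact_iff_isClosed_bounded]
      refine ⟨hXclosed, (Metric.isBounded_closedBall (x := (0 : Fin l → Fin k → E))
        (r := 1)).subset ?_⟩
      intro e he
      rw [Metric.mem_closedBall, dist_zero_right]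
      refine (pi_norm_le_iff_of_nonneg zero_le_one).2 fun j => ?_
      refine (pi_norm_le_iff_of_nonneg zero_le_one).2 fun t => ?_
      exact le_of_eq ((he j).1 t)
    have hXne : X.Nonempty := by
      refine ⟨fun _ t => (stdOrthonormalBasis ℝ E) (Fin.castLE hkE t), fun j => ?_⟩
      refine (stdOrthonormalBasis ℝ E).orthonormal.comp _ ?_
      intro a c hac
      simpa [Fin.ext_iff] using congrArg Fin.val hac
    -- the objective function
    set g : (Fin l → Fin k → E) → ℝ := fun e => ∑ i, Finset.univ.inf' Finset.univ_nonempty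
      (fun j => ‖F i‖ ^ 2 - ∑ t, (inner ℝ (F i) ((e j t : H)) : ℝ) ^ 2) with hg
    have hgcont : Continuous g := by
      refine continuous_finset_sum _ fun i _ => ?_
      refine Continuous.finset_inf'_apply Finset.univ_nonempty fun j _ => ?_
      refine Continuous.sub continuous_const ?_
      refine continuous_finset_sum _ fun t _ => ?_
      refine Continuous.pow ?_ 2
      exact Continuous.inner continuous_const
        (continuous_subtype_val.comp ((continuous_apply t).comp (continuous_apply j)))
    obtain ⟨e0, he0X, he0min⟩ := hXcompact.exists_isMinOn hXne hgcont.continuousOn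
    -- the candidate bundle
    set V : Fin l → Submodule ℝ H :=
      fun j => span ℝ (Set.range (fun t => ((e0 j t : H)))) with hV
    -- bridge: value of g on a frame family equals the bundle functional
    have hbridge : ∀ e ∈ X,
        (∑ i, ⨅ j, Metric.infDist (F i)
          ((span ℝ (Set.range (fun t => ((e j t : H)))) : Submodule ℝ H) : Set H) ^ 2) = g e := by
      intro e he
      refine Finset.sum_congr rfl fun i _ => ?_
      rw [ciInf_fin_eq_inf']
      refine Finset.inf'_congr _ rfl fun j _ => ?_
      have hon : Orthonormal ℝ (fun t => ((e j t : H))) :=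
        (he j).comp_linearIsometry E.subtypeₗᵢ
      exact infDist_sq_span_orthonormal hon (F i)
    have hVfd : ∀ j, FiniteDimensional ℝ (V j) := fun j =>
      FiniteDimensional.span_of_finite ℝ (Set.finite_range _)
    have hVrank : ∀ j, finrank ℝ (V j) ≤ k := by
      intro j
      have := finrank_range_le_card (R := ℝ) (fun t => ((e0 j t : H)))
      simpa [Set.finrank, hV] using this
    have hVmemS : g e0 ∈ S := ⟨V, hVfd, hVrank, (hbridge e0 he0X).symm⟩
    -- lower bound : g e0 ≤ x for every x ∈ S
    have hlb : ∀ x ∈ S, g e0 ≤ x := by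
      rintro x ⟨W, hWfd, hWrank, rfl⟩
      -- project each W j into E and choose a frame containing the projection
      set pE := orthogonalProjection E with hpE
      have hframe : ∀ j : Fin l, ∃ e : Fin k → E, Orthonormal ℝ e ∧
          (W j).map (pE : H →ₗ[ℝ] E) ≤ span ℝ (Set.range e) := by
        intro j
        haveI := hWfd j
        refine exists_orthonormal_frame_ge hkE _ ?_
        exact le_trans (Submodule.finrank_map_le _ _) (hWrank j)
      choose ee heON heGE using hframe
      have heX : ee ∈ X := fun j => heON j
      refine le_trans (he0min heX) ?_
      rw [hg]
      refine Finset.sum_le_sum fun i _ => ?_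
      refine le_ciInf fun j => ?_
      have hterm : ‖F i‖ ^ 2 - ∑ t, (inner ℝ (F i) ((ee j t : H)) : ℝ) ^ 2 =
          Metric.infDist (F i)
            ((span ℝ (Set.range (fun t => ((ee j t : H)))) : Submodule ℝ H) : Set H) ^ 2 :=
        (infDist_sq_span_orthonormal ((heON j).comp_linearIsometry E.subtypeₗᵢ) (F i)).symm
      have hstep1 : Metric.infDist (F i)
          ((span ℝ (Set.range (fun t => ((ee j t : H)))) : Submodule ℝ H) : Set H) ≤
          Metric.infDist (F i) ((((W j).map (pE : H →ₗ[ℝ] E)).map E.subtype : Submodule ℝ H)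
            : Set H) := by
        refine Metric.infDist_le_infDist_of_subset ?_ ⟨0, Submodule.zero_mem _⟩
        have h1 : (((W j).map (pE : H →ₗ[ℝ] E)).map E.subtype : Submodule ℝ H) ≤
            (span ℝ (Set.range (ee j))).map E.subtype := Submodule.map_mono (heGE j)
        have h2 : (span ℝ (Set.range (ee j))).map E.subtype =
            span ℝ (Set.range (fun t => ((ee j t : H)))) := by
          rw [Submodule.map_span]
          congr 1
          rw [← Set.range_comp]
          rfl
        intro y hy
        exact (h2 ▸ h1) hy
      have hstep2 : Metric.infDist (F i)
          ((((W j).map (pE : H →ₗ[ℝ] E)).map E.subtype : Submodule ℝ H) : Set H) ≤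
          Metric.infDist (F i) ((W j : Submodule ℝ H) : Set H) := by
        refine infDist_le_of_forall_exists ⟨0, Submodule.zero_mem _⟩ fun w hw => ?_
        refine ⟨((pE w : E) : H), ?_, ?_⟩
        · exact Submodule.mem_map_of_mem (Submodule.mem_map_of_mem hw)
        · have hFfix : ((pE (F i) : E) : H) = F i := E.starProjection_eq_self_iff.2 (hFE i)
          calc dist (F i) ((pE w : E) : H) = ‖F i - ((pE w : E) : H)‖ := dist_eq_norm _ _
            _ = ‖((pE (F i) : E) : H) - ((pE w : E) : H)‖ := by rw [hFfix]
            _ = ‖pE (F i) - pE w‖ := by rw [← Submodule.coe_sub]; rfl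
            _ = ‖pE (F i - w)‖ := by rw [map_sub]
            _ ≤ ‖pE‖ * ‖F i - w‖ := pE.le_opNorm _
            _ ≤ 1 * ‖F i - w‖ :=
              mul_le_mul_of_nonneg_right (orthogonalProjection_norm_le E) (norm_nonneg _)
            _ = dist (F i) w := by rw [one_mul, dist_eq_norm]
      calc Finset.univ.inf' Finset.univ_nonempty
            (fun j => ‖F i‖ ^ 2 - ∑ t, (inner ℝ (F i) ((ee j t : H)) : ℝ) ^ 2)
          ≤ ‖F i‖ ^ 2 - ∑ t, (inner ℝ (F i) ((ee j t : H)) : ℝ) ^ 2 :=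
            Finset.inf'_le _ (Finset.mem_univ j)
        _ = Metric.infDist (F i)
            ((span ℝ (Set.range (fun t => ((ee j t : H)))) : Submodule ℝ H) : Set H) ^ 2 := hterm
        _ ≤ Metric.infDist (F i) ((W j : Submodule ℝ H) : Set H) ^ 2 := by
            have := hstep1.trans hstep2
            exact pow_le_pow_left₀ Metric.infDist_nonneg this 2
    refine ⟨V, hVfd, fun j => Submodule.closed_of_finiteDimensional _, hVrank, ?_, ?_⟩
    · intro j
      rw [hV]
      apply Submodule.span_le.2
      rintro x ⟨t, rfl⟩
      exact (e0 j t).2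
    · rw [hbridge e0 he0X]
      exact le_antisymm (le_csInf ⟨g e0, hVmemS⟩ hlb) (csInf_le ⟨0, hS0⟩ hVmemS)
end
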